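/- Let g be the map from the previous context and define f : (ℤ/2ℤ)^(ℤ²) → ((ℤ/2ℤ)²)^(ℤ²) by applying g to every row: f(x)(i,j) = g(row_j(x))(i), where row_j(x)(i) = x(i,j). Then f is injective and continuous, and commutes with both horizontal and vertical shifts. -/
import Mathlib


def g (x : ℤ → ZMod 2) : ℤ → ZMod 2 × ZMod 2 :=
  fun i => if x (i + 1) = 0 then (x i, 0) else (0, 1)

/-- `f` applies `g` to every row. -/
def f (x : (ℤ × ℤ) → ZMod 2) : (ℤ × ℤ) → ZMod 2 × ZMod 2 :=
  fun p => g (fun i => x (i, p.2)) p.1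

/-- The row-wise skewing map `f` is injective, continuous, and commutes with the
horizontal and vertical shifts. -/
theorem f_injective_continuous_shift_commuting :
    Function.Injective f ∧ Continuous f ∧
      (∀ x : (ℤ × ℤ) → ZMod 2, ∀ u : ℤ × ℤ,
        f (fun v => x (v + u)) = fun v => f x (v + u)) := by
  refine ⟨?_, ?_, ?_⟩
  · intro x y h
    funext p
    obtain ⟨i, j⟩ := p
    have h2 := congrFun h (i - 1, j)
    simp only [f, g, sub_add_cancel] at h2
    have key : ∀ a : ZMod 2, a ≠ 0 → a = 1 := by decide
    by_cases hx : x (i, j) = 0 <;> by_cases hy : y (i, j) = 0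
    · rw [hx, hy]
    · simp [hx, hy] at h2
    · simp [hx, hy] at h2
    · rw [key _ hx, key _ hy]
  · apply continuous_pi
    intro p
    have : (fun x : (ℤ × ℤ) → ZMod 2 => f x p) =
        (fun q : ZMod 2 × ZMod 2 => if q.2 = 0 then (q.1, (0 : ZMod 2)) else (0, 1)) ∘
        (fun x : (ℤ × ℤ) → ZMod 2 => (x (p.1, p.2), x (p.1 + 1, p.2))) := by
      funext x; simp [f, g]
    rw [this]
    exact (continuous_of_discreteTopology).comp
      ((continuous_apply _).prodMk (continuous_apply _))
  · intro x u
    funext p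
    simp only [f, g]
    have h1 : ((p.1 + 1, p.2) : ℤ × ℤ) + u = (p.1 + u.1 + 1, p.2 + u.2) := by
      simp [Prod.ext_iff]; ring
    have h2 : p + u = ((p.1 + u.1, p.2 + u.2) : ℤ × ℤ) := rfl
    rw [h1, h2]
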